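/- Let M be a nonempty compact subset of ℝ^{n₀} and let σ : ℝ → ℝ be a continuous monotone activation function. Then every network function F ∈ NN_σ(n₀), i.e. every network function F : ℝ^{n₀} → ℝ with activation σ whose every layer has width at most n₀, attains its maximum value over M at a point of the boundary ∂M; that is, there exists x* ∈ ∂M with F(x*) = max_{x∈M} F(x). -/

import Mathlib

noncomputable section

/-- The rectified linear unit. -/
def ReLU (t : ℝ) : ℝ := max t 0

/-- `IsNetChain σ m F` : `F` is a network function of the form
`W_L ∘ A_{L-1} ∘ ⋯ ∘ A_1 + b_L` where `A_j x = σ (W_j x + b_j)` (with `σ` applied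
componentwise), and all layer widths `n_1,…,n_L` are at most `m`. -/
inductive IsNetChain (σ : ℝ → ℝ) (m : ℕ) : {a b : ℕ} → ((Fin a → ℝ) → (Fin b → ℝ)) → Prop
  | last {a b : ℕ} (W : Matrix (Fin b) (Fin a) ℝ) (v : Fin b → ℝ) (hb : b ≤ m) :
      IsNetChain σ m (fun x => W.mulVec x + v)
  | hidden {a b c : ℕ} (W : Matrix (Fin b) (Fin a) ℝ) (v : Fin b → ℝ)
      {g : (Fin b → ℝ) → (Fin c → ℝ)} (hb : b ≤ m) (hg : IsNetChain σ m g) :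
      IsNetChain σ m (fun x => g (fun i => σ (W.mulVec x i + v i)))

/-- Scalar-output network functions of width at most `m`; the class `NN_σ(m)`. -/
def IsScalarNet (σ : ℝ → ℝ) (m : ℕ) {n₀ : ℕ} (F : (Fin n₀ → ℝ) → ℝ) : Prop :=
  ∃ G : (Fin n₀ → ℝ) → (Fin 1 → ℝ), IsNetChain σ m G ∧ ∀ x, F x = G x 0

/-- A monotone function takes the same value between two equal values. -/
lemma sigma_between {σ : ℝ → ℝ} (hσm : Monotone σ ∨ Antitone σ) {z w u c : ℝ}
    (hz : σ z = c) (hw : σ w = c) (hzu : z ≤ u) (huw : u ≤ w) : σ u = c := by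
  rcases hσm with h | h
  · have h1 := h huw
    have h2 := h hzu
    rw [hz] at h2; rw [hw] at h1; linarith
  · have h1 := h huw
    have h2 := h hzu
    rw [hz] at h2; rw [hw] at h1; linarith

lemma IsNetChain.out_le {σ : ℝ → ℝ} {m : ℕ} {a c : ℕ} {G : (Fin a → ℝ) → (Fin c → ℝ)}
    (h : IsNetChain σ m G) : c ≤ m := by
  induction h with
  | last W v hb => exact hb
  | hidden W v hb hg ih => exact ih

lemma mulVec_entry_continuous {a b : ℕ} (W : Matrix (Fin b) (Fin a) ℝ) (j : Fin b) :
    Continuous fun x : Fin a → ℝ => W.mulVec x j := by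
  simp only [Matrix.mulVec, dotProduct]
  exact continuous_finset_sum _ fun k _ => continuous_const.mul (continuous_apply k)

lemma mulVec_continuous {a b : ℕ} (W : Matrix (Fin b) (Fin a) ℝ) :
    Continuous fun x : Fin a → ℝ => W.mulVec x :=
  continuous_pi fun j => mulVec_entry_continuous W j

lemma layer_continuous {σ : ℝ → ℝ} (hσc : Continuous σ) {a b : ℕ}
    (W : Matrix (Fin b) (Fin a) ℝ) (v : Fin b → ℝ) :
    Continuous (fun x : Fin a → ℝ => fun i => σ (W.mulVec x i + v i)) :=
  continuous_pi fun i => hσc.comp ((mulVec_entry_continuous W i).add continuous_const)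

lemma IsNetChain.continuous {σ : ℝ → ℝ} {m : ℕ} (hσc : Continuous σ) {a c : ℕ}
    {G : (Fin a → ℝ) → (Fin c → ℝ)} (h : IsNetChain σ m G) : Continuous G := by
  induction h with
  | last W v hb => exact (mulVec_continuous W).add continuous_const
  | hidden W v hb hg ih => exact ih.comp (layer_continuous hσc W v)

/-- A continuous path starting inside a compact set and ending outside it passes through a
non-interior point of the set. -/
lemma exit_point {n : ℕ} {K : Set (Fin n → ℝ)} (hK : IsCompact K)
    {γ : ℝ → (Fin n → ℝ)} (hγ : Continuous γ) (h0 : γ 0 ∈ K) (h1 : γ 1 ∉ K) :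
    ∃ s ∈ Set.Icc (0:ℝ) 1, γ s ∈ K ∧ γ s ∉ interior K := by
  set S : Set ℝ := Set.Icc 0 1 ∩ γ ⁻¹' K with hS
  have hSc : IsCompact S := isCompact_Icc.inter_right (hK.isClosed.preimage hγ)
  have hSne : S.Nonempty := ⟨0, ⟨le_refl 0, zero_le_one⟩, h0⟩
  have hs₀ : sSup S ∈ S := hSc.sSup_mem hSne
  set s₀ := sSup S
  have hmem : s₀ ∈ Set.Icc (0:ℝ) 1 := hs₀.1
  refine ⟨s₀, hmem, hs₀.2, ?_⟩
  intro hint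
  have hlt : s₀ < 1 := lt_of_le_of_ne hmem.2 (fun h => h1 (h ▸ hs₀.2))
  have hopen : IsOpen (γ ⁻¹' interior K) := isOpen_interior.preimage hγ
  rcases Metric.isOpen_iff.1 hopen s₀ hint with ⟨δ, hδ, hball⟩
  set s := min (s₀ + δ/2) ((s₀+1)/2) with hsdef
  have hs1 : s₀ < s := lt_min (by linarith) (by linarith)
  have hs2 : s ≤ 1 := le_trans (min_le_right _ _) (by linarith)
  have hs3 : |s - s₀| < δ := by
    rw [abs_sub_lt_iff]
    constructor
    · have : s ≤ s₀ + δ/2 := min_le_left _ _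
      linarith
    · linarith
  have hsint : γ s ∈ interior K := hball (by simpa [Real.dist_eq] using hs3)
  have hsS : s ∈ S := ⟨⟨le_trans hmem.1 hs1.le, hs2⟩, Set.mem_preimage.2 (interior_subset hsint)⟩
  have : s ≤ s₀ := le_csSup hSc.bddAbove hsS
  linarith

/-- If `F` is constant on a ray from a point of a compact set, its value there is attained
at a non-interior point. -/
lemma ray_exit {n : ℕ} {K : Set (Fin n → ℝ)} (hK : IsCompact K)
    {F : (Fin n → ℝ) → ℝ} {x₀ u : Fin n → ℝ} (hx₀ : x₀ ∈ K) (hu : u ≠ 0)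
    (hconst : ∀ t : ℝ, 0 ≤ t → F (x₀ + t • u) = F x₀) :
    ∃ x ∈ K, x ∉ interior K ∧ F x = F x₀ := by
  obtain ⟨R, hR⟩ := hK.isBounded.subset_closedBall 0
  have hup : 0 < ‖u‖ := norm_pos_iff.2 hu
  have hx₀R : ‖x₀‖ ≤ R := by simpa using hR hx₀
  set T : ℝ := (R + ‖x₀‖ + 1)/‖u‖ with hT
  have hx₀n : 0 ≤ ‖x₀‖ := norm_nonneg _
  have hT0 : 0 < T := div_pos (by linarith) hup
  set γ : ℝ → (Fin n → ℝ) := fun t => x₀ + (t * T) • u with hγdef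
  have hγc : Continuous γ :=
    continuous_const.add (((continuous_id.mul continuous_const)).smul continuous_const)
  have hγ0 : γ 0 ∈ K := by
    simpa [hγdef] using hx₀
  have h1 : γ 1 ∉ K := by
    intro h
    have h2 : ‖x₀ + T • u‖ ≤ R := by
      have := hR h
      simpa [hγdef] using this
    have h4 : ‖T • u‖ ≤ ‖x₀ + T • u‖ + ‖x₀‖ := by
      have h5 := norm_sub_le (x₀ + T • u) x₀
      rwa [add_sub_cancel_left] at h5
    rw [norm_smul, Real.norm_eq_abs, abs_of_pos hT0] at h4
    have hTu : T * ‖u‖ = R + ‖x₀‖ + 1 := by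
      rw [hT, div_mul_cancel₀ _ hup.ne']
    linarith
  obtain ⟨s, hs, hsK, hsint⟩ := exit_point hK hγc hγ0 h1
  exact ⟨γ s, hsK, hsint, hconst _ (mul_nonneg hs.1 hT0.le)⟩

theorem chain_max {σ : ℝ → ℝ} {m : ℕ} (hσc : Continuous σ) (hσm : Monotone σ ∨ Antitone σ)
    {a c : ℕ} {G : (Fin a → ℝ) → (Fin c → ℝ)} (hG : IsNetChain σ m G) :
    ∀ (_ : a = m) (i : Fin c) (K : Set (Fin a → ℝ)), IsCompact K → K.Nonempty →
      ∃ x ∈ K, x ∉ interior K ∧ ∀ y ∈ K, G y i ≤ G x i := by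
  induction hG with
  | @last a b W v hb =>
    intro ha i K hK hne
    subst ha
    set F : (Fin a → ℝ) → ℝ := fun y => W.mulVec y i + v i with hF
    have hFc : Continuous F := (mulVec_entry_continuous W i).add continuous_const
    obtain ⟨xs, hxs, hmax⟩ := hK.exists_isMaxOn hne hFc.continuousOn
    by_cases hint : xs ∈ interior K
    · have hapos : 0 < a := lt_of_lt_of_le i.pos hb
      set u : Fin a → ℝ := Pi.single ⟨0, hapos⟩ 1 with hu_def
      have hu : u ≠ 0 := by
        intro h
        have h2 := congrFun h ⟨0, hapos⟩
        simp [hu_def, Pi.single_eq_same] at h2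
      rcases Metric.isOpen_iff.1 isOpen_interior xs hint with ⟨δ, hδ, hball⟩
      have hunorm : 0 < ‖u‖ := norm_pos_iff.2 hu
      set t : ℝ := δ / (2 * ‖u‖) with ht_def
      have ht : 0 < t := by positivity
      have hmem : ∀ ε : ℝ, |ε| = t → xs + ε • u ∈ K := by
        intro ε hε
        refine interior_subset (hball ?_)
        rw [Metric.mem_ball, dist_eq_norm]
        have h3 : xs + ε • u - xs = ε • u := by abel
        rw [h3, norm_smul, Real.norm_eq_abs, hε, ht_def]
        have h4 : δ / (2 * ‖u‖) * ‖u‖ = δ / 2 := by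
          field_simp
        rw [h4]
        linarith
      have e : ∀ s : ℝ, F (xs + s • u) = F xs + s * W.mulVec u i := by
        intro s
        simp only [hF, Matrix.mulVec_add, Matrix.mulVec_smul, Pi.add_apply, Pi.smul_apply,
          smul_eq_mul]
        ring
      have hslope : W.mulVec u i = 0 := by
        have h1 : F (xs + t • u) ≤ F xs := hmax (hmem t (abs_of_pos ht))
        have h2 : F (xs + (-t) • u) ≤ F xs := hmax (hmem (-t) (by rw [abs_neg, abs_of_pos ht]))
        rw [e t] at h1; rw [e (-t)] at h2
        nlinarith
      have hconst : ∀ s : ℝ, 0 ≤ s → F (xs + s • u) = F xs := by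
        intro s _
        rw [e s, hslope]
        ring
      obtain ⟨x, hxK, hxint, hFx⟩ := ray_exit hK hxs hu hconst
      refine ⟨x, hxK, hxint, fun y hy => ?_⟩
      show F y ≤ F x
      rw [hFx]
      exact hmax hy
    · refine ⟨xs, hxs, hint, fun y hy => ?_⟩
      show F y ≤ F xs
      exact hmax hy
  | @hidden a b c W v g hb hg ih =>
    intro ha i K hK hne
    subst ha
    set Φ : (Fin a → ℝ) → (Fin b → ℝ) := fun x => fun j => σ (W.mulVec x j + v j) with hΦ
    have hΦc : Continuous Φ := layer_continuous hσc W v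
    have hgc : Continuous g := hg.continuous hσc
    by_cases hker : ∃ u, u ≠ 0 ∧ W.mulVec u = 0
    · obtain ⟨u, hu, hWu⟩ := hker
      set F : (Fin a → ℝ) → ℝ := fun x => g (Φ x) i with hF
      have hFc : Continuous F := (continuous_apply i).comp (hgc.comp hΦc)
      obtain ⟨xs, hxs, hmax⟩ := hK.exists_isMaxOn hne hFc.continuousOn
      have hconst : ∀ t : ℝ, 0 ≤ t → F (xs + t • u) = F xs := by
        intro t _
        have hΦeq : Φ (xs + t • u) = Φ xs := by
          funext j
          simp [hΦ, Matrix.mulVec_add, Matrix.mulVec_smul, hWu]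
        simp only [hF, hΦeq]
      obtain ⟨x, hxK, hxint, hFx⟩ := ray_exit hK hxs hu hconst
      refine ⟨x, hxK, hxint, fun y hy => ?_⟩
      show F y ≤ F x
      rw [hFx]
      exact hmax hy
    · push_neg at hker
      have hinj : Function.Injective W.mulVecLin := by
        rw [injective_iff_map_eq_zero]
        intro u hu
        by_contra h0
        exact hker u h0 (by simpa using hu)
      have hle : a ≤ b := by
        have := LinearMap.finrank_le_finrank_of_injective hinj
        simpa using this
      have hba : b = a := le_antisymm hb hle
      subst hba
      have hdet : IsUnit W.det := by
        rw [isUnit_iff_ne_zero]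
        intro h0
        obtain ⟨u, hu0, hWu⟩ := Matrix.exists_mulVec_eq_zero_iff.2 h0
        exact hker u hu0 hWu
      have hWinv1 : ∀ y : Fin b → ℝ, W.mulVec (W⁻¹.mulVec y) = y := by
        intro y
        rw [Matrix.mulVec_mulVec, Matrix.mul_nonsing_inv _ hdet, Matrix.one_mulVec]
      have hWinv2 : ∀ x : Fin b → ℝ, W⁻¹.mulVec (W.mulVec x) = x := by
        intro x
        rw [Matrix.mulVec_mulVec, Matrix.nonsing_inv_mul _ hdet, Matrix.one_mulVec]
      have hKt : IsCompact (Φ '' K) := hK.image hΦc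
      have hKtne : (Φ '' K).Nonempty := hne.image Φ
      obtain ⟨yt, hytK, hytint, hytmax⟩ := ih rfl i (Φ '' K) hKt hKtne
      obtain ⟨x₀, hx₀K, hx₀Φ⟩ := hytK
      set z : Fin b → ℝ := fun j => W.mulVec x₀ j + v j with hz
      have hzy : ∀ j, σ (z j) = yt j := by
        intro j
        have h2 := congrFun hx₀Φ j
        simpa [hΦ, hz] using h2
      have hmax : ∀ y ∈ K, g (Φ y) i ≤ g (Φ x₀) i := by
        intro y hy
        rw [hx₀Φ]
        exact hytmax _ (Set.mem_image_of_mem Φ hy)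
      by_cases hP : ∀ x, (∀ j, σ (W.mulVec x j + v j) = yt j) → x ∈ interior K
      · by_cases hray : ∃ j, ∃ ε : ℝ, ε ≠ 0 ∧ ∀ t : ℝ, 0 ≤ t → σ (z j + t * ε) = yt j
        · obtain ⟨j, ε, hε0, hεp⟩ := hray
          set u : Fin b → ℝ := W⁻¹.mulVec (Pi.single j ε) with hu_def
          have hWu : W.mulVec u = Pi.single j ε := hWinv1 _
          have hu : u ≠ 0 := by
            intro h
            have h2 := congrFun hWu j
            rw [h, Matrix.mulVec_zero] at h2
            simp [Pi.single_eq_same] at h2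
            exact hε0 h2.symm
          set F : (Fin b → ℝ) → ℝ := fun x => g (Φ x) i with hF
          have hconst : ∀ t : ℝ, 0 ≤ t → F (x₀ + t • u) = F x₀ := by
            intro t ht
            have hΦeq : Φ (x₀ + t • u) = Φ x₀ := by
              funext j'
              have hWcomp : W.mulVec (x₀ + t • u) j' = W.mulVec x₀ j' + t * (Pi.single j ε : Fin b → ℝ) j' := by
                rw [Matrix.mulVec_add, Matrix.mulVec_smul, hWu]
                simp
              show σ (W.mulVec (x₀ + t • u) j' + v j') = σ (W.mulVec x₀ j' + v j')
              rw [hWcomp]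
              by_cases hjj : j' = j
              · subst hjj
                rw [Pi.single_eq_same]
                have e1 : W.mulVec x₀ j' + t * ε + v j' = z j' + t * ε := by
                  simp only [hz]; ring
                rw [e1, hεp t ht]
                have e2 : W.mulVec x₀ j' + v j' = z j' := by simp only [hz]
                rw [e2, hzy j']
              · rw [Pi.single_eq_of_ne hjj]
                ring_nf
            simp only [hF, hΦeq]
          obtain ⟨x, hxK, hxint, hFx⟩ := ray_exit hK hx₀K hu hconst
          refine ⟨x, hxK, hxint, fun y hy => ?_⟩
          show F y ≤ F x
          rw [hFx]
          exact hmax y hy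
        · push_neg at hray
          set I : Fin b → Set ℝ := fun j => σ ⁻¹' {yt j} with hI
          have hIz : ∀ j, z j ∈ I j := fun j => hzy j
          have hIclosed : ∀ j, IsClosed (I j) := fun j => isClosed_singleton.preimage hσc
          have hIbddA : ∀ j, BddAbove (I j) := by
            intro j
            obtain ⟨t, ht0, htne⟩ := hray j 1 one_ne_zero
            refine ⟨z j + t * 1, fun w hw => ?_⟩
            by_contra hlt
            push_neg at hlt
            have hw' : σ w = yt j := hw
            exact htne (sigma_between hσm (hzy j) hw' (by nlinarith) hlt.le)
          have hIbddB : ∀ j, BddBelow (I j) := by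
            intro j
            obtain ⟨t, ht0, htne⟩ := hray j (-1) (by norm_num)
            refine ⟨z j + t * (-1), fun w hw => ?_⟩
            by_contra hlt
            push_neg at hlt
            have hw' : σ w = yt j := hw
            exact htne (sigma_between hσm hw' (hzy j) hlt.le (by nlinarith))
          set β : Fin b → ℝ := fun j => sSup (I j) with hβ
          set α : Fin b → ℝ := fun j => sInf (I j) with hα
          have hβmem : ∀ j, β j ∈ I j := fun j => (hIclosed j).csSup_mem ⟨z j, hIz j⟩ (hIbddA j)
          have hαmem : ∀ j, α j ∈ I j := fun j => (hIclosed j).csInf_mem ⟨z j, hIz j⟩ (hIbddB j)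
          have hβval : ∀ j, σ (β j) = yt j := fun j => hβmem j
          have hαval : ∀ j, σ (α j) = yt j := fun j => hαmem j
          have hαβ : ∀ j, α j ≤ β j := fun j => csInf_le_csSup ⟨z j, hIz j⟩ (hIbddB j) (hIbddA j)
          have hIcc : ∀ j w, α j ≤ w → w ≤ β j → σ w = yt j := by
            intro j w h1 h2
            exact sigma_between hσm (hαval j) (hβval j) h1 h2
          have hup : ∀ j (δ : ℝ), 0 < δ → σ (β j + δ) ≠ yt j := by
            intro j δ hδ h
            have : β j + δ ≤ β j := le_csSup (hIbddA j) h
            linarith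
          have hdn : ∀ j (δ : ℝ), 0 < δ → σ (α j - δ) ≠ yt j := by
            intro j δ hδ h
            have : α j ≤ α j - δ := csInf_le (hIbddB j) h
            linarith
          set Q : ℝ → Set (Fin b → ℝ) :=
            fun δ => {x | ∀ j, W.mulVec x j + v j ∈ Set.Icc (α j - δ) (β j + δ)} with hQ
          have hQclosed : ∀ δ : ℝ, IsClosed (Q δ) := by
            intro δ
            have hQeq : Q δ = ⋂ j, (fun x : Fin b → ℝ => W.mulVec x j + v j) ⁻¹'
                Set.Icc (α j - δ) (β j + δ) := by
              ext x
              simp [hQ]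
            rw [hQeq]
            exact isClosed_iInter fun j =>
              isClosed_Icc.preimage ((mulVec_entry_continuous W j).add continuous_const)
          have hQcompact : ∀ δ : ℝ, IsCompact (Q δ) := by
            intro δ
            have hsub : Q δ ⊆ (fun y : Fin b → ℝ => W⁻¹.mulVec (y - v)) ''
                (Set.univ.pi fun j => Set.Icc (α j - δ) (β j + δ)) := by
              intro x hx
              refine ⟨fun j => W.mulVec x j + v j, fun j _ => hx j, ?_⟩
              show W⁻¹.mulVec ((fun j => W.mulVec x j + v j) - v) = x
              have e1 : (fun j => W.mulVec x j + v j) - v = W.mulVec x := by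
                funext j
                simp
              rw [e1, hWinv2]
            have himg : IsCompact ((fun y : Fin b → ℝ => W⁻¹.mulVec (y - v)) ''
                (Set.univ.pi fun j => Set.Icc (α j - δ) (β j + δ))) :=
              (isCompact_univ_pi fun j => isCompact_Icc).image
                ((mulVec_continuous W⁻¹).comp (continuous_id.sub continuous_const))
            exact himg.of_isClosed_subset (hQclosed δ) hsub
          have hδex : ∃ n : ℕ, Q (1/((n:ℝ)+1)) ⊆ interior K := by
            by_contra hcon
            push_neg at hcon
            set s : ℕ → Set (Fin b → ℝ) := fun n => Q (1/((n:ℝ)+1)) \ interior K with hs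
            have hssub : ∀ n, s (n+1) ⊆ s n := by
              intro n x hx
              refine ⟨fun j => ?_, hx.2⟩
              have h1 : (1:ℝ)/((n:ℝ)+1+1) ≤ 1/((n:ℝ)+1) := by
                apply one_div_le_one_div_of_le
                · positivity
                · linarith
              have h2 := hx.1 j
              simp only [Set.mem_Icc] at h2 ⊢
              push_cast at h2
              constructor
              · linarith [h2.1]
              · linarith [h2.2]
            have hsne : ∀ n, (s n).Nonempty := by
              intro n
              obtain ⟨x, hx1, hx2⟩ := Set.not_subset.1 (hcon n)
              exact ⟨x, hx1, hx2⟩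
            have hsclosed : ∀ n, IsClosed (s n) := fun n =>
              (hQclosed _).sdiff isOpen_interior
            have hscompact : IsCompact (s 0) :=
              (hQcompact _).of_isClosed_subset (hsclosed 0) Set.diff_subset
            obtain ⟨x, hx⟩ := IsCompact.nonempty_iInter_of_sequence_nonempty_isCompact_isClosed
              s hssub hsne hscompact hsclosed
            rw [Set.mem_iInter] at hx
            have hxI : ∀ j, σ (W.mulVec x j + v j) = yt j := by
              intro j
              apply hIcc j
              · by_contra hlt
                push_neg at hlt
                obtain ⟨n, hn⟩ := exists_nat_one_div_lt
                  (show (0:ℝ) < α j - (W.mulVec x j + v j) by linarith)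
                have h2 := (hx n).1 j
                simp only [Set.mem_Icc] at h2
                linarith [h2.1]
              · by_contra hlt
                push_neg at hlt
                obtain ⟨n, hn⟩ := exists_nat_one_div_lt
                  (show (0:ℝ) < (W.mulVec x j + v j) - β j by linarith)
                have h2 := (hx n).1 j
                simp only [Set.mem_Icc] at h2
                linarith [h2.2]
            exact (hx 0).2 (hP x hxI)
          obtain ⟨nδ, hQsub⟩ := hδex
          set δ : ℝ := 1/((nδ:ℝ)+1) with hδdef
          have hδ0 : 0 < δ := by positivity
          have hstr : ∀ j, (σ (α j - δ) < yt j ∧ yt j < σ (β j + δ)) ∨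
              (yt j < σ (α j - δ) ∧ σ (β j + δ) < yt j) := by
            intro j
            rcases hσm with hmono | hanti
            · left
              constructor
              · have h2 := hmono (show α j - δ ≤ α j by linarith)
                rw [hαval j] at h2
                exact lt_of_le_of_ne h2 (hdn j δ hδ0)
              · have h2 := hmono (show β j ≤ β j + δ by linarith)
                rw [hβval j] at h2
                exact lt_of_le_of_ne h2 (Ne.symm (hup j δ hδ0))
            · right
              constructor
              · have h2 := hanti (show α j - δ ≤ α j by linarith)
                rw [hαval j] at h2
                exact lt_of_le_of_ne h2 (Ne.symm (hdn j δ hδ0))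
              · have h2 := hanti (show β j ≤ β j + δ by linarith)
                rw [hβval j] at h2
                exact lt_of_le_of_ne h2 (hup j δ hδ0)
          have hbpos : 0 < b := lt_of_lt_of_le i.pos hg.out_le
          have hfin : (Finset.univ : Finset (Fin b)).Nonempty :=
            ⟨⟨0, hbpos⟩, Finset.mem_univ _⟩
          set εj : Fin b → ℝ := fun j => min (|σ (β j + δ) - yt j|) (|yt j - σ (α j - δ)|)
            with hεj
          have hεj0 : ∀ j, 0 < εj j := by
            intro j
            rcases hstr j with ⟨h1, h2⟩ | ⟨h1, h2⟩
            · exact lt_min (by rw [abs_of_pos (by linarith)]; linarith)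
                (by rw [abs_of_pos (by linarith)]; linarith)
            · exact lt_min (by rw [abs_of_neg (by linarith)]; linarith)
                (by rw [abs_of_neg (by linarith)]; linarith)
          set ε : ℝ := Finset.univ.inf' hfin εj with hε
          have hε0 : 0 < ε := by
            rw [hε, Finset.lt_inf'_iff]
            intro j _
            exact hεj0 j
          have hball : Metric.ball yt ε ⊆ Φ '' K := by
            intro y hy
            rw [Metric.mem_ball] at hy
            have hyj : ∀ j, |y j - yt j| < εj j := by
              intro j
              have h1 := (dist_pi_lt_iff hε0).1 hy j
              rw [Real.dist_eq] at h1
              exact lt_of_lt_of_le h1 (Finset.inf'_le _ (Finset.mem_univ j))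
            have hw : ∀ j, ∃ w ∈ Set.Icc (α j - δ) (β j + δ), σ w = y j := by
              intro j
              have hab : α j - δ ≤ β j + δ := by linarith [hαβ j]
              have e1 : εj j ≤ |σ (β j + δ) - yt j| := min_le_left _ _
              have e2 : εj j ≤ |yt j - σ (α j - δ)| := min_le_right _ _
              have habs := abs_lt.1 (hyj j)
              rcases hstr j with ⟨h1, h2⟩ | ⟨h1, h2⟩
              · have hmem : y j ∈ Set.Icc (σ (α j - δ)) (σ (β j + δ)) := by
                  rw [abs_of_pos (by linarith)] at e1
                  rw [abs_of_pos (by linarith)] at e2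
                  constructor
                  · linarith [habs.1]
                  · linarith [habs.2]
                obtain ⟨w, hw1, hw2⟩ := intermediate_value_Icc hab hσc.continuousOn hmem
                exact ⟨w, hw1, hw2⟩
              · have hmem : y j ∈ Set.Icc (σ (β j + δ)) (σ (α j - δ)) := by
                  rw [abs_of_neg (by linarith)] at e1
                  rw [abs_of_neg (by linarith)] at e2
                  constructor
                  · linarith [habs.1]
                  · linarith [habs.2]
                obtain ⟨w, hw1, hw2⟩ := intermediate_value_Icc' hab hσc.continuousOn hmem
                exact ⟨w, hw1, hw2⟩
            choose w hw1 hw2 using hw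
            set x : Fin b → ℝ := W⁻¹.mulVec (w - v) with hx
            have hx1 : ∀ j, W.mulVec x j + v j = w j := by
              intro j
              have e1 : W.mulVec x = w - v := hWinv1 _
              rw [e1]
              simp
            have hxQ : x ∈ Q δ := by
              simp only [hQ, Set.mem_setOf_eq]
              intro j
              rw [hx1 j]
              exact hw1 j
            have hxK : x ∈ K := interior_subset (hQsub hxQ)
            refine ⟨x, hxK, ?_⟩
            funext j
            show σ (W.mulVec x j + v j) = y j
            rw [hx1 j]
            exact hw2 j
          have hytin : yt ∈ interior (Φ '' K) :=
            mem_interior.2 ⟨Metric.ball yt ε, hball, Metric.isOpen_ball, Metric.mem_ball_self hε0⟩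
          exact absurd hytin hytint
      · push_neg at hP
        obtain ⟨p, hpΦ, hpint⟩ := hP
        by_cases hpK : p ∈ K
        · refine ⟨p, hpK, hpint, fun y hy => ?_⟩
          show g (Φ y) i ≤ g (Φ p) i
          have hΦp : Φ p = yt := funext hpΦ
          rw [hΦp, ← hx₀Φ]
          exact hmax y hy
        · set γ : ℝ → (Fin b → ℝ) := fun s => x₀ + s • (p - x₀) with hγ
          have hγc : Continuous γ := continuous_const.add (continuous_id.smul continuous_const)
          have hγ0 : γ 0 ∈ K := by simpa [hγ] using hx₀K
          have hγ1 : γ 1 ∉ K := by simpa [hγ] using hpK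
          obtain ⟨s, hs, hsK, hsint⟩ := exit_point hK hγc hγ0 hγ1
          have hΦγ : Φ (γ s) = yt := by
            funext j
            have hcomp : W.mulVec (γ s) j + v j = z j + s * ((W.mulVec p j + v j) - z j) := by
              simp only [hγ, hz]
              rw [Matrix.mulVec_add, Matrix.mulVec_smul, Matrix.mulVec_sub]
              simp only [Pi.add_apply, Pi.smul_apply, Pi.sub_apply, smul_eq_mul]
              ring
            show σ (W.mulVec (γ s) j + v j) = yt j
            rw [hcomp]
            have hzv := hzy j
            have hwv : σ (W.mulVec p j + v j) = yt j := hpΦ j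
            rcases le_total (z j) (W.mulVec p j + v j) with hle | hle
            · exact sigma_between hσm hzv hwv (by nlinarith [hs.1, hs.2])
                (by nlinarith [hs.1, hs.2])
            · exact sigma_between hσm hwv hzv (by nlinarith [hs.1, hs.2])
                (by nlinarith [hs.1, hs.2])
          refine ⟨γ s, hsK, hsint, fun y hy => ?_⟩
          show g (Φ y) i ≤ g (Φ (γ s)) i
          rw [hΦγ, ← hx₀Φ]
          exact hmax y hy

theorem maximum_principle
    (n₀ : ℕ) (M : Set (Fin n₀ → ℝ)) (hM : IsCompact M) (hMne : M.Nonempty)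
    (σ : ℝ → ℝ) (hσc : Continuous σ) (hσm : Monotone σ ∨ Antitone σ)
    (F : (Fin n₀ → ℝ) → ℝ) (hF : IsScalarNet σ n₀ F) :
    ∃ x₀ ∈ frontier M, x₀ ∈ M ∧ ∀ x ∈ M, F x ≤ F x₀ := by
  obtain ⟨G, hG, hFG⟩ := hF
  obtain ⟨x, hxK, hxint, hmax⟩ := chain_max hσc hσm hG rfl 0 M hM hMne
  refine ⟨x, ?_, hxK, fun y hy => by rw [hFG, hFG]; exact hmax y hy⟩
  rw [hM.isClosed.frontier_eq]
  exact ⟨hxK, hxint⟩
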